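/- Let R > 0 and 0 < 2M < R, and set χ = 2M/R. Let m : [0,R] → ℝ be continuously differentiable with m(0) = 0, m(R) = M, m′(r) ≥ 0, and 0 ≤ 2m(r) < r for all r ∈ (0,R]. Let P : [0,R] → ℝ be differentiable with P(r) ≥ 0 for all r, P(R) = 0, and suppose P satisfies the TOV equation P′(r) = −(m(r)+4πr³P(r))·(m′(r)/(4πr²)+P(r))/(r(r−2m(r))) for all r ∈ (0,R). Then the central pressure satisfies P(0) ≥ −(1/(16πR²))·(ln(1−χ) + χ). -/

import Mathlib

open Real Set

theorem central_pressure_lower_bound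
    (R M χ : ℝ) (hR : 0 < R) (hM : 0 < 2 * M) (hMR : 2 * M < R)
    (hχ : χ = 2 * M / R)
    (m m' P P' : ℝ → ℝ)
    (hm_deriv : ∀ r ∈ Icc (0:ℝ) R, HasDerivWithinAt m (m' r) (Icc 0 R) r)
    (hm'_cont : ContinuousOn m' (Icc 0 R))
    (hm0 : m 0 = 0) (hmR : m R = M)
    (hm'_nonneg : ∀ r ∈ Icc (0:ℝ) R, 0 ≤ m' r)
    (hm_bound : ∀ r ∈ Ioc (0:ℝ) R, 0 ≤ 2 * m r ∧ 2 * m r < r)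
    (hP_deriv : ∀ r ∈ Icc (0:ℝ) R, HasDerivWithinAt P (P' r) (Icc 0 R) r)
    (hP_nonneg : ∀ r ∈ Icc (0:ℝ) R, 0 ≤ P r)
    (hPR : P R = 0)
    (hTOV : ∀ r ∈ Ioo (0:ℝ) R,
      P' r = -(m r + 4 * π * r ^ 3 * P r) * (m' r / (4 * π * r ^ 2) + P r)
        / (r * (r - 2 * m r))) :
    P 0 ≥ -(1 / (16 * π * R ^ 2)) * (Real.log (1 - χ) + χ) := by
  have hπ : (0:ℝ) < π := Real.pi_pos
  set c : ℝ := 1 / (4 * π * R ^ 3) with hc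
  set G : ℝ → ℝ := fun u => c * (-u / 2 - R / 4 * Real.log (R - 2 * u)) with hG
  set G' : ℝ → ℝ := fun u => c * (u / (R - 2 * u)) with hG'
  -- derivative of G
  have hGderiv : ∀ u : ℝ, 0 < R - 2 * u → HasDerivAt G (G' u) u := by
    intro u hu
    have h1 : HasDerivAt (fun u : ℝ => R - 2 * u) (-2) u := by
      simpa using ((hasDerivAt_id u).const_mul (2:ℝ)).const_sub R
    have h2 : HasDerivAt (fun u : ℝ => Real.log (R - 2 * u)) (-2 / (R - 2 * u)) u :=
      h1.log (ne_of_gt hu)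
    have hA : HasDerivAt (fun u : ℝ => -u / 2) (-1 / 2) u := by
      simpa using ((hasDerivAt_id u).neg.div_const 2)
    have hB := h2.const_mul (R / 4)
    have h3 := ((hA.sub hB).const_mul c)
    refine HasDerivAt.congr_deriv h3 ?_
    have hune : R - 2 * u ≠ 0 := ne_of_gt hu
    rw [hG']
    field_simp
    ring
  -- positivity of R - 2 m r on Icc
  have hR2m : ∀ r ∈ Icc (0:ℝ) R, 0 < R - 2 * m r := by
    intro r hr
    rcases eq_or_lt_of_le hr.1 with h0 | h0
    · simp [← h0, hm0, hR]
    · have := hm_bound r ⟨h0, hr.2⟩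
      linarith [hr.2]
  set F : ℝ → ℝ := fun r => P r + G (m r) with hF
  have hFderiv : ∀ r ∈ Icc (0:ℝ) R,
      HasDerivWithinAt F (P' r + G' (m r) * m' r) (Icc 0 R) r := by
    intro r hr
    exact (hP_deriv r hr).add
      (((hGderiv (m r) (hR2m r hr)).comp_hasDerivWithinAt r (hm_deriv r hr)))
  have hanti : AntitoneOn F (Icc 0 R) := by
    apply antitoneOn_of_deriv_nonpos (convex_Icc 0 R)
    · exact fun r hr => (hFderiv r hr).continuousWithinAt
    · rw [interior_Icc]
      intro r hr
      exact (((hFderiv r (Ioo_subset_Icc_self hr)).hasDerivAt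
        (Icc_mem_nhds hr.1 hr.2)).differentiableAt).differentiableWithinAt
    · rw [interior_Icc]
      intro r hr
      have hd := (hFderiv r (Ioo_subset_Icc_self hr)).hasDerivAt (Icc_mem_nhds hr.1 hr.2)
      rw [hd.deriv]
      -- key inequality
      obtain ⟨hr0, hrR⟩ := hr
      have hrIcc : r ∈ Icc (0:ℝ) R := Ioo_subset_Icc_self ⟨hr0, hrR⟩
      obtain ⟨hm_nn, hm_lt⟩ := hm_bound r ⟨hr0, le_of_lt hrR⟩
      have ha : 0 ≤ m r := by linarith
      have hb : 0 ≤ m' r := hm'_nonneg r hrIcc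
      have hp : 0 ≤ P r := hP_nonneg r hrIcc
      have hden1 : 0 < r * (r - 2 * m r) := mul_pos hr0 (by linarith)
      have hden2 : 0 < R - 2 * m r := hR2m r hrIcc
      have hr2 : (0:ℝ) < r ^ 2 := by positivity
      have hr3 : (0:ℝ) < r ^ 3 := by positivity
      have hTOVr := hTOV r ⟨hr0, hrR⟩
      -- -P' r ≥ m m' / (4π r³ (r - 2m))
      have key1 : m r * m' r / (4 * π * r ^ 3 * (r - 2 * m r)) ≤ -P' r := by
        rw [hTOVr]
        rw [show -(-(m r + 4 * π * r ^ 3 * P r) * (m' r / (4 * π * r ^ 2) + P r)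
            / (r * (r - 2 * m r)))
          = (m r + 4 * π * r ^ 3 * P r) * (m' r / (4 * π * r ^ 2) + P r)
            / (r * (r - 2 * m r)) from by ring]
        have e1 : m r * m' r / (4 * π * r ^ 3 * (r - 2 * m r))
            = (m r * (m' r / (4 * π * r ^ 2))) / (r * (r - 2 * m r)) := by
          rw [div_eq_div_iff (ne_of_gt (mul_pos (by positivity : (0:ℝ) < 4 * π * r ^ 3) (by linarith : (0:ℝ) < r - 2 * m r))) (ne_of_gt hden1)]
          field_simp
        rw [e1]
        have h7 : (0:ℝ) ≤ 4 * π * r ^ 3 * P r := by positivity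
        gcongr
        all_goals linarith
      -- comparison of denominators
      have key2 : G' (m r) * m' r ≤ m r * m' r / (4 * π * r ^ 3 * (r - 2 * m r)) := by
        have e2 : G' (m r) * m' r = m r * m' r / (4 * π * R ^ 3 * (R - 2 * m r)) := by
          rw [hG', hc]
          field_simp
          all_goals ring
        rw [e2]
        have h4 : (0:ℝ) < r - 2 * m r := by linarith
        have hRr : r ≤ R := le_of_lt hrR
        have h3 : r ^ 3 ≤ R ^ 3 := pow_le_pow_left₀ (le_of_lt hr0) hRr 3
        have hmono : r - 2 * m r ≤ R - 2 * m r := by linarith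
        have h5 : r ^ 3 * (r - 2 * m r) ≤ R ^ 3 * (R - 2 * m r) :=
          mul_le_mul h3 hmono h4.le (by positivity)
        have h6 : 4 * π * (r ^ 3 * (r - 2 * m r)) ≤ 4 * π * (R ^ 3 * (R - 2 * m r)) :=
          mul_le_mul_of_nonneg_left h5 (by positivity)
        apply div_le_div_of_nonneg_left (mul_nonneg ha hb)
          (by nlinarith [mul_pos (mul_pos (by positivity : (0:ℝ) < 4 * π) hr3) h4])
        nlinarith [h6]
      linarith
  -- conclude: F R ≤ F 0
  have hmain : P R + G (m R) ≤ P 0 + G (m 0) :=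
    hanti (left_mem_Icc.mpr (le_of_lt hR)) (right_mem_Icc.mpr (le_of_lt hR)) (le_of_lt hR)
  rw [hPR, hm0, hmR] at hmain
  -- so P 0 ≥ G M - G 0
  have hP0 : P 0 ≥ G M - G 0 := by linarith
  have hRM : (0:ℝ) < R - 2 * M := by linarith
  have hlog : Real.log (1 - χ) = Real.log (R - 2 * M) - Real.log R := by
    rw [hχ]
    have : 1 - 2 * M / R = (R - 2 * M) / R := by field_simp
    rw [this, Real.log_div (ne_of_gt hRM) (ne_of_gt hR)]
  have hGval : G M - G 0 = -(1 / (16 * π * R ^ 2)) * (Real.log (1 - χ) + χ) := by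
    rw [show G M = c * (-M / 2 - R / 4 * Real.log (R - 2 * M)) from rfl,
      show G 0 = c * (-0 / 2 - R / 4 * Real.log (R - 2 * 0)) from rfl,
      show R - 2 * (0:ℝ) = R from by ring, hlog, hχ, hc]
    field_simp
    ring
  rw [hGval] at hP0
  exact hP0
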